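/- Fix β with 0 < β < 1/2. The function f(x) = x(1+x²)^{-1/2}·log(1+(1+x²)^{(1-2β)/2}) − (1−2β)·sgnlog(x) is continuous on ℝ and tends to 0 as x → ±∞; i.e., f ∈ C₀(ℝ). -/

import Mathlib

noncomputable def sgnlog (x : ℝ) : ℝ := Real.sign x * Real.log (1 + |x|)

open Real Filter

lemma sgnlog_neg (x : ℝ) : sgnlog (-x) = - sgnlog x := by
  simp [sgnlog, Real.sign_neg, abs_neg]

lemma continuous_logabs : Continuous fun y : ℝ => Real.log (1 + |y|) :=
  (continuous_const.add continuous_abs).log (fun x => (by positivity : (0:ℝ) < 1 + |x|).ne')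

lemma continuous_sgnlog : Continuous sgnlog := by
  rw [continuous_iff_continuousAt]
  intro x
  rcases lt_trichotomy x 0 with hx | hx | hx
  · have hev : ∀ᶠ y in nhds x, (fun y : ℝ => - Real.log (1 + |y|)) y = sgnlog y := by
      filter_upwards [eventually_lt_nhds hx] with y hy
      simp [sgnlog, Real.sign_of_neg hy]
    exact (continuous_logabs.neg.continuousAt).congr hev
  · subst hx
    have h0 : sgnlog 0 = 0 := by simp [sgnlog]
    unfold ContinuousAt
    rw [h0]
    apply squeeze_zero_norm (a := fun y : ℝ => Real.log (1 + |y|))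
    · intro y
      have h1 : (0:ℝ) ≤ Real.log (1 + |y|) := Real.log_nonneg (by simp [abs_nonneg])
      have h2 : |Real.sign y| ≤ 1 := by
        rcases Real.sign_apply_eq y with h | h | h <;> simp [h]
      calc ‖sgnlog y‖ = |Real.sign y| * |Real.log (1 + |y|)| := by
            rw [sgnlog, Real.norm_eq_abs, abs_mul]
        _ ≤ 1 * |Real.log (1 + |y|)| := by
            exact mul_le_mul_of_nonneg_right h2 (abs_nonneg _)
        _ = Real.log (1 + |y|) := by rw [one_mul, abs_of_nonneg h1]
    · have h := continuous_logabs.continuousAt (x := (0:ℝ))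
      unfold ContinuousAt at h
      simpa using h
  · have hev : ∀ᶠ y in nhds x, (fun y : ℝ => Real.log (1 + |y|)) y = sgnlog y := by
      filter_upwards [eventually_gt_nhds hx] with y hy
      simp [sgnlog, Real.sign_of_pos hy]
    exact (continuous_logabs.continuousAt).congr hev

lemma tendsto_ratio_one :
    Tendsto (fun x : ℝ => (1 + x ^ 2) / (1 + x) ^ 2) atTop (nhds 1) := by
  have hinv : Tendsto (fun x : ℝ => 1 / x) atTop (nhds 0) := by
    simpa [one_div] using tendsto_inv_atTop_zero (𝕜 := ℝ)
  have hinv2 : Tendsto (fun x : ℝ => 1 / x ^ 2) atTop (nhds 0) := by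
    have := tendsto_inv_atTop_zero (𝕜 := ℝ) |>.comp (tendsto_pow_atTop (two_ne_zero))
    simpa [one_div, Function.comp_def] using this
  have hnum : Tendsto (fun x : ℝ => 1 / x ^ 2 + 1) atTop (nhds (0 + 1)) :=
    hinv2.add tendsto_const_nhds
  have hden : Tendsto (fun x : ℝ => 1 / x ^ 2 + 2 * (1 / x) + 1) atTop (nhds (0 + 2 * 0 + 1)) :=
    (hinv2.add (hinv.const_mul 2)).add tendsto_const_nhds
  have hdiv := hnum.div hden (by norm_num)
  have h1 : ((0:ℝ) + 1) / (0 + 2 * 0 + 1) = 1 := by norm_num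
  rw [h1] at hdiv
  apply hdiv.congr'
  filter_upwards [eventually_gt_atTop (0:ℝ)] with x hx
  have hx0 : x ≠ 0 := ne_of_gt hx
  have hx1 : (1:ℝ) + x ≠ 0 := by positivity
  rw [Pi.div_apply]
  field_simp
  ring

lemma tendsto_B (A : ℝ) (hA : 0 < A) :
    Tendsto (fun x : ℝ => Real.log (1 + (1 + x ^ 2) ^ (A / 2)) - A * Real.log (1 + x))
      atTop (nhds 0) := by
  have h1 : Tendsto (fun x : ℝ => (1 + x) ^ (-A)) atTop (nhds 0) := by
    have := (tendsto_rpow_neg_atTop hA).comp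
      (tendsto_atTop_add_const_left atTop (1:ℝ) tendsto_id)
    simpa [Function.comp_def] using this
  have h2 : Tendsto (fun x : ℝ => ((1 + x ^ 2) / (1 + x) ^ 2) ^ (A / 2)) atTop (nhds 1) := by
    have hc := (Real.continuousAt_rpow_const 1 (A / 2) (Or.inl one_ne_zero)).tendsto
    have := hc.comp tendsto_ratio_one
    simpa [Function.comp_def] using this
  have hu : Tendsto (fun x : ℝ => (1 + x) ^ (-A) + ((1 + x ^ 2) / (1 + x) ^ 2) ^ (A / 2))
      atTop (nhds 1) := by
    have := h1.add h2
    simpa using this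
  have hlog : Tendsto (fun x : ℝ =>
      Real.log ((1 + x) ^ (-A) + ((1 + x ^ 2) / (1 + x) ^ 2) ^ (A / 2))) atTop (nhds 0) := by
    have := (Real.continuousAt_log one_ne_zero).tendsto.comp hu
    simpa [Function.comp_def] using this
  apply hlog.congr'
  filter_upwards [eventually_gt_atTop (0:ℝ)] with x hx
  have hx1 : (0:ℝ) < 1 + x := by linarith
  have hx2 : (0:ℝ) < 1 + x ^ 2 := by positivity
  have hw : (0:ℝ) < (1 + x) ^ A := Real.rpow_pos_of_pos hx1 A
  have hsq : ((1 + x) ^ (2:ℕ) : ℝ) ^ (A / 2) = (1 + x) ^ A := by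
    rw [← Real.rpow_natCast (1 + x) 2, ← Real.rpow_mul hx1.le]
    congr 1
    ring
  have hdr : ((1 + x ^ 2) / (1 + x) ^ 2) ^ (A / 2)
      = (1 + x ^ 2) ^ (A / 2) / (1 + x) ^ A := by
    rw [Real.div_rpow hx2.le (by positivity), hsq]
  have hneg : (1 + x) ^ (-A) = 1 / (1 + x) ^ A := by
    rw [Real.rpow_neg hx1.le, one_div]
  rw [hneg, hdr, ← add_div, Real.log_div (by positivity) hw.ne',
    Real.log_rpow hx1]

lemma tendsto_f_atTop (A : ℝ) (hA : 0 < A) :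
    Tendsto (fun x : ℝ =>
      x / Real.sqrt (1 + x ^ 2) * Real.log (1 + (1 + x ^ 2) ^ (A / 2)) - A * sgnlog x)
      atTop (nhds 0) := by
  have hB := tendsto_B A hA
  -- term 1 : q * B  → 0
  have hterm1 : Tendsto (fun x : ℝ => x / Real.sqrt (1 + x ^ 2)
      * (Real.log (1 + (1 + x ^ 2) ^ (A / 2)) - A * Real.log (1 + x))) atTop (nhds 0) := by
    apply squeeze_zero_norm (a := fun x : ℝ =>
      |Real.log (1 + (1 + x ^ 2) ^ (A / 2)) - A * Real.log (1 + x)|)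
    · intro x
      have hs : (0:ℝ) < Real.sqrt (1 + x ^ 2) := Real.sqrt_pos.mpr (by positivity)
      have hq : |x / Real.sqrt (1 + x ^ 2)| ≤ 1 := by
        rw [abs_div, abs_of_pos hs, div_le_one hs]
        calc |x| = Real.sqrt (x ^ 2) := (Real.sqrt_sq_eq_abs x).symm
          _ ≤ Real.sqrt (1 + x ^ 2) := Real.sqrt_le_sqrt (by linarith)
      calc ‖_ * _‖ = |x / Real.sqrt (1 + x ^ 2)| * |_| := by rw [Real.norm_eq_abs, abs_mul]
        _ ≤ 1 * _ := mul_le_mul_of_nonneg_right hq (abs_nonneg _)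
        _ = _ := one_mul _
    · have := hB.abs
      simpa using this
  -- g : A * (log(1+x)/x) → 0
  have hg : Tendsto (fun x : ℝ => A * (Real.log (1 + x) / x)) atTop (nhds 0) := by
    have base := Real.tendsto_pow_log_div_mul_add_atTop 1 (-1) 1 one_ne_zero
    have comp := base.comp (tendsto_atTop_add_const_left atTop (1:ℝ) tendsto_id)
    have comp' : Tendsto (fun x : ℝ => Real.log (1 + x) / x) atTop (nhds 0) := by
      apply comp.congr
      intro x
      simp [Function.comp]
    have := comp'.const_mul A
    simpa using this
  -- term 2 : A * ((q - 1) * log(1+x)) → 0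
  have hterm2 : Tendsto (fun x : ℝ =>
      A * ((x / Real.sqrt (1 + x ^ 2) - 1) * Real.log (1 + x))) atTop (nhds 0) := by
    apply squeeze_zero_norm' _ hg
    filter_upwards [eventually_ge_atTop (1:ℝ)] with x hx
    have hx0 : (0:ℝ) < x := by linarith
    set s := Real.sqrt (1 + x ^ 2) with hs_def
    have hs : (0:ℝ) < s := Real.sqrt_pos.mpr (by positivity)
    have hs2 : s ^ 2 = 1 + x ^ 2 := Real.sq_sqrt (by positivity)
    have hxs : x ≤ s := by
      calc x = Real.sqrt (x ^ 2) := by rw [Real.sqrt_sq hx0.le]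
        _ ≤ s := Real.sqrt_le_sqrt (by linarith)
    have hsle : s ≤ 1 + x := by nlinarith [hs.le]
    have hq1 : x / s ≤ 1 := (div_le_one hs).mpr hxs
    have h1q : 1 - x / s ≤ 1 / x := by
      rw [sub_div' hs.ne', div_le_div_iff₀ hs hx0]
      nlinarith
    have hlog0 : (0:ℝ) ≤ Real.log (1 + x) := Real.log_nonneg (by linarith)
    have habs : |x / s - 1| = 1 - x / s := by
      rw [abs_of_nonpos (by linarith)]; ring
    calc ‖A * ((x / s - 1) * Real.log (1 + x))‖
        = A * ((1 - x / s) * Real.log (1 + x)) := by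
          rw [Real.norm_eq_abs, abs_mul, abs_of_pos hA, abs_mul, habs,
            abs_of_nonneg hlog0]
      _ ≤ A * (Real.log (1 + x) / x) := by
          apply mul_le_mul_of_nonneg_left _ hA.le
          calc (1 - x / s) * Real.log (1 + x) ≤ (1 / x) * Real.log (1 + x) :=
                mul_le_mul_of_nonneg_right h1q hlog0
            _ = Real.log (1 + x) / x := by rw [one_div, inv_mul_eq_div]
  -- combine
  have hsum := hterm1.add hterm2
  rw [add_zero] at hsum
  apply hsum.congr'
  filter_upwards [eventually_gt_atTop (0:ℝ)] with x hx
  have : sgnlog x = Real.log (1 + x) := by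
    simp [sgnlog, Real.sign_of_pos hx, abs_of_pos hx]
  rw [this]
  ring

theorem beta_log_transform_diff_c0 (β : ℝ) (hβ0 : 0 < β) (hβ : β < 1 / 2) :
    Continuous (fun x : ℝ =>
      x / Real.sqrt (1 + x ^ 2) * Real.log (1 + (1 + x ^ 2) ^ ((1 - 2 * β) / 2))
        - (1 - 2 * β) * sgnlog x) ∧
    Filter.Tendsto (fun x : ℝ =>
      x / Real.sqrt (1 + x ^ 2) * Real.log (1 + (1 + x ^ 2) ^ ((1 - 2 * β) / 2))
        - (1 - 2 * β) * sgnlog x)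
      (Filter.cocompact ℝ) (nhds 0) := by
  set A := 1 - 2 * β with hA_def
  have hA : 0 < A := by rw [hA_def]; linarith
  set f : ℝ → ℝ := fun x =>
    x / Real.sqrt (1 + x ^ 2) * Real.log (1 + (1 + x ^ 2) ^ (A / 2)) - A * sgnlog x
    with hf_def
  have hodd : ∀ x : ℝ, f (-x) = - f x := by
    intro x
    simp only [hf_def]
    rw [sgnlog_neg]
    have h1 : (-x) ^ 2 = x ^ 2 := by ring
    rw [h1]
    ring
  constructor
  · apply Continuous.sub
    · apply Continuous.mul
      · apply Continuous.div continuous_id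
        · exact Real.continuous_sqrt.comp (by continuity)
        · intro x
          exact (Real.sqrt_pos.mpr (by positivity)).ne'
      · apply Continuous.log
        · exact continuous_const.add
            ((continuous_const.add (continuous_pow 2)).rpow_const
              (fun x => Or.inl (by positivity : (0:ℝ) < 1 + x ^ 2).ne'))
        · intro x
          have : (0:ℝ) < (1 + x ^ 2) ^ (A / 2) := Real.rpow_pos_of_pos (by positivity) _
          positivity
    · exact continuous_const.mul continuous_sgnlog
  · have htop : Tendsto f atTop (nhds 0) := tendsto_f_atTop A hA
    have hbot : Tendsto f atBot (nhds 0) := by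
      have hcomp : Tendsto (fun x : ℝ => f (-x)) atBot (nhds 0) :=
        htop.comp tendsto_neg_atBot_atTop
      have : Tendsto (fun x : ℝ => - f (-x)) atBot (nhds (-0)) := hcomp.neg
      rw [neg_zero] at this
      apply this.congr
      intro x
      rw [hodd x, neg_neg]
    rw [cocompact_eq_atBot_atTop]
    exact tendsto_sup.mpr ⟨hbot, htop⟩
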